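/- (Euler–Maclaurin estimate for weighted Gaussian Riemann sums) Let k be a nonnegative integer and let 0 < a₁ ≤ a₂ be real numbers. There exists a constant C > 0 such that for every integer p ≥ 1, every a ∈ [a₁, a₂], and every v ∈ ℝ, one has | ∑_{m=0}^∞ (m/√p)^k · exp(−2π (v − m/(a√p))²) − a^{k+1} √p · ∫_{−∞}^v (v − t)^k exp(−2πt²) dt | ≤ C · (1 + |v|)^k. -/

import Mathlib

open Real MeasureTheory Set

noncomputable section EMWGS

/-- Master dominating function: `(k + 1 + 4π|s|)(1+|s|)^k e^{-2πs²}`. -/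
def emPsi (k : ℕ) (s : ℝ) : ℝ :=
  ((k : ℝ) + 1 + 4 * π * |s|) * (1 + |s|) ^ k * Real.exp (-2 * π * s ^ 2)

lemma emPsi_nonneg (k : ℕ) (s : ℝ) : 0 ≤ emPsi k s := by
  unfold emPsi
  have := Real.pi_pos
  positivity

lemma continuous_emPsi (k : ℕ) : Continuous (emPsi k) := by
  unfold emPsi; fun_prop

lemma integrable_one_add_abs_pow_exp (n : ℕ) :
    Integrable (fun s : ℝ => (1 + |s|) ^ n * Real.exp (-(2 * π) * s ^ 2)) := by
  have hb : (0 : ℝ) < 2 * π := by positivity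
  have h1 : Integrable (fun s : ℝ => Real.exp (-(2 * π) * s ^ 2)) := integrable_exp_neg_mul_sq hb
  have h2 : Integrable (fun s : ℝ => s ^ (2 * n) * Real.exp (-(2 * π) * s ^ 2)) := by
    have h := integrable_rpow_mul_exp_neg_mul_sq (b := 2 * π) hb (s := ((2 * n : ℕ) : ℝ))
      (lt_of_lt_of_le neg_one_lt_zero (Nat.cast_nonneg _))
    simp only [Real.rpow_natCast] at h
    exact h
  refine Integrable.mono' ((h1.const_mul ((2:ℝ) ^ n)).add (h2.const_mul ((2:ℝ) ^ n)))
    (Continuous.aestronglyMeasurable (by fun_prop : Continuous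
      (fun s : ℝ => (1 + |s|) ^ n * Real.exp (-(2 * π) * s ^ 2))))
    (ae_of_all _ fun x => ?_)
  have hE : 0 < Real.exp (-(2 * π) * x ^ 2) := Real.exp_pos _
  have hbnd : (1 + |x|) ^ n ≤ 2 ^ n + 2 ^ n * x ^ (2 * n) := by
    rcases le_total |x| 1 with hx | hx
    · have h1 : (1 + |x|) ^ n ≤ 2 ^ n := by
        apply pow_le_pow_left₀ (by positivity)
        linarith
      have h2 : (0:ℝ) ≤ 2 ^ n * x ^ (2 * n) := by
        have : (0:ℝ) ≤ x ^ (2 * n) := by rw [pow_mul]; positivity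
        positivity
      linarith
    · have h1 : (1 + |x|) ^ n ≤ (2 * |x|) ^ n := by
        apply pow_le_pow_left₀ (by positivity)
        linarith
      have h2 : (2 * |x|) ^ n = 2 ^ n * |x| ^ n := mul_pow _ _ _
      have h3 : |x| ^ n ≤ |x| ^ (2 * n) := pow_le_pow_right₀ hx (by omega)
      have h4 : |x| ^ (2 * n) = x ^ (2 * n) := by
        have hx2 : (0:ℝ) ≤ x ^ (2 * n) := by rw [pow_mul]; positivity
        rw [← abs_pow, abs_of_nonneg hx2]
      have h5 : (0:ℝ) < 2 ^ n := by positivity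
      nlinarith
  have hn : ‖(1 + |x|) ^ n * Real.exp (-(2 * π) * x ^ 2)‖
      = (1 + |x|) ^ n * Real.exp (-(2 * π) * x ^ 2) := by
    rw [Real.norm_eq_abs, abs_of_nonneg (by positivity)]
  rw [hn]
  have := mul_le_mul_of_nonneg_right hbnd hE.le
  calc (1 + |x|) ^ n * Real.exp (-(2 * π) * x ^ 2)
      ≤ (2 ^ n + 2 ^ n * x ^ (2 * n)) * Real.exp (-(2 * π) * x ^ 2) := this
    _ = 2 ^ n * Real.exp (-(2 * π) * x ^ 2)
        + 2 ^ n * (x ^ (2 * n) * Real.exp (-(2 * π) * x ^ 2)) := by ring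

lemma integrable_emPsi (k : ℕ) : Integrable (emPsi k) := by
  have hb : (0 : ℝ) < 2 * π := by positivity
  refine Integrable.mono' (((integrable_one_add_abs_pow_exp (k + 1)).const_mul
    ((k : ℝ) + 1 + 4 * π))) ((continuous_emPsi k).aestronglyMeasurable)
    (ae_of_all _ fun s => ?_)
  have hpi := Real.pi_pos
  have hE : (0:ℝ) < Real.exp (-(2 * π) * s ^ 2) := Real.exp_pos _
  have hB : (0:ℝ) ≤ (1 + |s|) ^ k := by positivity
  have hn : ‖emPsi k s‖ = emPsi k s := by
    rw [Real.norm_eq_abs, abs_of_nonneg (emPsi_nonneg k s)]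
  rw [hn]
  unfold emPsi
  have hexp : -2 * π * s ^ 2 = -(2 * π) * s ^ 2 := by ring
  rw [hexp]
  have hco : (k : ℝ) + 1 + 4 * π * |s| ≤ ((k : ℝ) + 1 + 4 * π) * (1 + |s|) := by
    have h1 : (0:ℝ) ≤ |s| := abs_nonneg s
    nlinarith [Nat.cast_nonneg (α := ℝ) k]
  calc ((k : ℝ) + 1 + 4 * π * |s|) * (1 + |s|) ^ k * Real.exp (-(2 * π) * s ^ 2)
      ≤ (((k : ℝ) + 1 + 4 * π) * (1 + |s|)) * (1 + |s|) ^ k * Real.exp (-(2 * π) * s ^ 2) := by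
        have := mul_le_mul_of_nonneg_right (mul_le_mul_of_nonneg_right hco hB) hE.le
        calc ((k : ℝ) + 1 + 4 * π * |s|) * (1 + |s|) ^ k * Real.exp (-(2 * π) * s ^ 2)
            ≤ (((k : ℝ) + 1 + 4 * π) * (1 + |s|)) * (1 + |s|) ^ k
              * Real.exp (-(2 * π) * s ^ 2) := this
          _ = _ := rfl
    _ = ((k : ℝ) + 1 + 4 * π) * ((1 + |s|) ^ (k + 1) * Real.exp (-(2 * π) * s ^ 2)) := by
        rw [pow_succ]; ring

/-- The summand function. -/
def phiF (k : ℕ) (v t : ℝ) : ℝ := t ^ k * Real.exp (-2 * π * (v - t) ^ 2)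

/-- Its derivative in `t`. -/
def phiD (k : ℕ) (v t : ℝ) : ℝ :=
  (k : ℝ) * t ^ (k - 1) * Real.exp (-2 * π * (v - t) ^ 2)
    + t ^ k * (Real.exp (-2 * π * (v - t) ^ 2) * (4 * π * (v - t)))

lemma hasDerivAt_phiF (k : ℕ) (v t : ℝ) : HasDerivAt (phiF k v) (phiD k v t) t := by
  have h1 : HasDerivAt (fun t : ℝ => t ^ k) ((k : ℝ) * t ^ (k - 1)) t := hasDerivAt_pow k t
  have h2 : HasDerivAt (fun t : ℝ => -2 * π * (v - t) ^ 2) (4 * π * (v - t)) t := by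
    have hs : HasDerivAt (fun t : ℝ => v - t) (-1) t := (hasDerivAt_id t).const_sub v
    have := (hs.pow 2).const_mul (-2 * π)
    refine this.congr_deriv ?_
    ring
  exact h1.mul h2.exp

lemma continuous_phiF (k : ℕ) (v : ℝ) : Continuous (phiF k v) := by
  unfold phiF; fun_prop

lemma continuous_phiD (k : ℕ) (v : ℝ) : Continuous (phiD k v) := by
  unfold phiD; fun_prop

lemma abs_t_le (v t : ℝ) : |t| ≤ (1 + |v|) * (1 + |t - v|) := by
  have h1 : |t| ≤ |v| + |t - v| := by
    calc |t| = |v + (t - v)| := by ring_nf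
      _ ≤ |v| + |t - v| := abs_add_le _ _
  nlinarith [abs_nonneg v, abs_nonneg (t - v)]

lemma phiF_bound (k : ℕ) (v t : ℝ) : |phiF k v t| ≤ (1 + |v|) ^ k * emPsi k (t - v) := by
  have hE : (0:ℝ) < Real.exp (-2 * π * (t - v) ^ 2) := Real.exp_pos _
  have hsq : (v - t) ^ 2 = (t - v) ^ 2 := by ring
  have h1 : |phiF k v t| = |t| ^ k * Real.exp (-2 * π * (t - v) ^ 2) := by
    unfold phiF
    rw [abs_mul, abs_pow, Real.abs_exp, hsq]
  have h2 : |t| ^ k ≤ (1 + |v|) ^ k * (1 + |t - v|) ^ k := by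
    rw [← mul_pow]
    exact pow_le_pow_left₀ (abs_nonneg t) (abs_t_le v t) k
  have h3 : (1 + |t - v|) ^ k ≤ ((k : ℝ) + 1 + 4 * π * |t - v|) * (1 + |t - v|) ^ k := by
    have hb : (0:ℝ) ≤ (1 + |t - v|) ^ k := by positivity
    have hc : (1:ℝ) ≤ (k : ℝ) + 1 + 4 * π * |t - v| := by
      have := Real.pi_pos
      nlinarith [Nat.cast_nonneg (α := ℝ) k, abs_nonneg (t - v)]
    nlinarith
  rw [h1]
  unfold emPsi
  have hW : (0:ℝ) ≤ (1 + |v|) ^ k := by positivity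
  calc |t| ^ k * Real.exp (-2 * π * (t - v) ^ 2)
      ≤ ((1 + |v|) ^ k * (1 + |t - v|) ^ k) * Real.exp (-2 * π * (t - v) ^ 2) :=
        mul_le_mul_of_nonneg_right h2 hE.le
    _ ≤ ((1 + |v|) ^ k * (((k : ℝ) + 1 + 4 * π * |t - v|) * (1 + |t - v|) ^ k))
        * Real.exp (-2 * π * (t - v) ^ 2) := by
        apply mul_le_mul_of_nonneg_right _ hE.le
        exact mul_le_mul_of_nonneg_left h3 hW
    _ = (1 + |v|) ^ k
        * (((k : ℝ) + 1 + 4 * π * |t - v|) * (1 + |t - v|) ^ k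
          * Real.exp (-2 * π * (t - v) ^ 2)) := by ring

lemma phiD_bound (k : ℕ) (v t : ℝ) : |phiD k v t| ≤ (1 + |v|) ^ k * emPsi k (t - v) := by
  have hE : (0:ℝ) < Real.exp (-2 * π * (t - v) ^ 2) := Real.exp_pos _
  have hpi := Real.pi_pos
  have hsq : (v - t) ^ 2 = (t - v) ^ 2 := by ring
  set s := t - v with hs
  set W := 1 + |v| with hW
  set B := 1 + |s| with hB
  have hW1 : (1:ℝ) ≤ W := by rw [hW]; linarith [abs_nonneg v]
  have hB1 : (1:ℝ) ≤ B := by rw [hB]; linarith [abs_nonneg s]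
  have hWB : (1:ℝ) ≤ W * B := by nlinarith
  have htk : |t| ^ k ≤ W ^ k * B ^ k := by
    rw [← mul_pow]
    exact pow_le_pow_left₀ (abs_nonneg t) (abs_t_le v t) k
  have htk1 : |t| ^ (k - 1) ≤ W ^ k * B ^ k := by
    calc |t| ^ (k - 1) ≤ (W * B) ^ (k - 1) :=
          pow_le_pow_left₀ (abs_nonneg t) (abs_t_le v t) _
      _ ≤ (W * B) ^ k := pow_le_pow_right₀ hWB (Nat.sub_le k 1)
      _ = W ^ k * B ^ k := mul_pow _ _ _
  have habs : |v - t| = |s| := by rw [hs, abs_sub_comm]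
  have h1 : |phiD k v t| ≤ (k : ℝ) * |t| ^ (k - 1) * Real.exp (-2 * π * s ^ 2)
      + |t| ^ k * (Real.exp (-2 * π * s ^ 2) * (4 * π * |s|)) := by
    unfold phiD
    refine (abs_add_le _ _).trans (le_of_eq ?_)
    rw [abs_mul, abs_mul, abs_mul, abs_mul, abs_mul, Real.abs_exp, abs_pow, abs_pow]
    rw [Nat.abs_cast, abs_of_nonneg (by positivity : (0:ℝ) ≤ 4 * π), habs, hsq]
  refine h1.trans ?_
  have hBk : (0:ℝ) ≤ B ^ k := by positivity
  have hWk : (0:ℝ) ≤ W ^ k := by positivity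
  have hterm1 : (k : ℝ) * |t| ^ (k - 1) * Real.exp (-2 * π * s ^ 2)
      ≤ (k : ℝ) * (W ^ k * B ^ k) * Real.exp (-2 * π * s ^ 2) := by
    have := mul_le_mul_of_nonneg_left htk1 (Nat.cast_nonneg (α := ℝ) k)
    exact mul_le_mul_of_nonneg_right this hE.le
  have hterm2 : |t| ^ k * (Real.exp (-2 * π * s ^ 2) * (4 * π * |s|))
      ≤ (W ^ k * B ^ k) * (Real.exp (-2 * π * s ^ 2) * (4 * π * |s|)) := by
    apply mul_le_mul_of_nonneg_right htk
    positivity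
  have hsum := add_le_add hterm1 hterm2
  refine hsum.trans ?_
  unfold emPsi
  rw [← hB]
  have heq : (k : ℝ) * (W ^ k * B ^ k) * Real.exp (-2 * π * s ^ 2)
      + W ^ k * B ^ k * (Real.exp (-2 * π * s ^ 2) * (4 * π * |s|))
      = W ^ k * (((k : ℝ) + 4 * π * |s|) * B ^ k * Real.exp (-2 * π * s ^ 2)) := by ring
  rw [heq]
  apply mul_le_mul_of_nonneg_left _ hWk
  have hco : ((k : ℝ) + 4 * π * |s|) ≤ (k : ℝ) + 1 + 4 * π * |s| := by linarith
  exact mul_le_mul_of_nonneg_right (mul_le_mul_of_nonneg_right hco hBk) hE.le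

lemma integrable_phiF (k : ℕ) (v : ℝ) : Integrable (phiF k v) := by
  refine Integrable.mono' (((integrable_emPsi k).comp_sub_right v).const_mul ((1 + |v|) ^ k))
    ((continuous_phiF k v).aestronglyMeasurable) (ae_of_all _ fun t => ?_)
  simpa [Real.norm_eq_abs] using phiF_bound k v t

lemma integrable_phiD (k : ℕ) (v : ℝ) : Integrable (phiD k v) := by
  refine Integrable.mono' (((integrable_emPsi k).comp_sub_right v).const_mul ((1 + |v|) ^ k))
    ((continuous_phiD k v).aestronglyMeasurable) (ae_of_all _ fun t => ?_)
  simpa [Real.norm_eq_abs] using phiD_bound k v t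

lemma integral_abs_phiD_le (k : ℕ) (v : ℝ) :
    ∫ t in Ici (0:ℝ), |phiD k v t| ≤ (1 + |v|) ^ k * ∫ s, emPsi k s := by
  have hint : Integrable (fun t => |phiD k v t|) := (integrable_phiD k v).abs
  have h1 : ∫ t in Ici (0:ℝ), |phiD k v t| ≤ ∫ t, |phiD k v t| :=
    setIntegral_le_integral hint (ae_of_all _ fun t => abs_nonneg _)
  have h2 : ∫ t, |phiD k v t| ≤ ∫ t, (1 + |v|) ^ k * emPsi k (t - v) := by
    refine integral_mono hint
      (((integrable_emPsi k).comp_sub_right v).const_mul ((1 + |v|) ^ k))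
      (fun t => phiD_bound k v t)
  have h3 : ∫ t, (1 + |v|) ^ k * emPsi k (t - v) = (1 + |v|) ^ k * ∫ t, emPsi k (t - v) :=
    integral_const_mul _ _
  have h4 : ∫ t, emPsi k (t - v) = ∫ s, emPsi k s := integral_sub_right_eq_self _ v
  rw [h3, h4] at h2
  exact h1.trans h2

/-- General Riemann-sum estimate on `[0, ∞)` with step `h`. -/
lemma riemann_sum_est (φ φd : ℝ → ℝ) (hφc : Continuous φ) (hφdc : Continuous φd)
    (hder : ∀ t, HasDerivAt φ (φd t) t)
    (hint : Integrable φ) (hintd : Integrable φd) (h : ℝ) (hh : 0 < h) :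
    Summable (fun m : ℕ => φ (m * h)) ∧
      |(∑' m : ℕ, φ ((m : ℝ) * h)) - (1 / h) * ∫ t in Ici (0:ℝ), φ t|
        ≤ ∫ t in Ici (0:ℝ), |φd t| := by
  set s : ℕ → Set ℝ := fun m => Ico ((m : ℝ) * h) (((m : ℝ) + 1) * h) with hsdef
  have hmeas : ∀ m, MeasurableSet (s m) := fun m => measurableSet_Ico
  have hdisj : Pairwise (Function.onFun Disjoint s) := by
    intro m n hmn
    rcases lt_or_gt_of_ne hmn with hlt | hlt
    · refine Set.Ico_disjoint_Ico.mpr ?_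
      have : ((m : ℝ) + 1) * h ≤ (n : ℝ) * h := by
        apply mul_le_mul_of_nonneg_right _ hh.le
        exact_mod_cast Nat.succ_le_of_lt hlt
      exact le_trans (min_le_left _ _) (this.trans (le_max_right _ _))
    · refine Set.Ico_disjoint_Ico.mpr ?_
      have : ((n : ℝ) + 1) * h ≤ (m : ℝ) * h := by
        apply mul_le_mul_of_nonneg_right _ hh.le
        exact_mod_cast Nat.succ_le_of_lt hlt
      exact le_trans (min_le_right _ _) (this.trans (le_max_left _ _))
  have hunion : (⋃ m, s m) = Ici (0:ℝ) := by
    apply Subset.antisymm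
    · rintro x hx
      rcases mem_iUnion.1 hx with ⟨m, hm⟩
      have : (0:ℝ) ≤ (m : ℝ) * h := by positivity
      exact le_trans this hm.1
    · intro x hx
      refine mem_iUnion.2 ⟨⌊x / h⌋₊, ?_, ?_⟩
      · rw [← le_div_iff₀ hh]
        exact Nat.floor_le (div_nonneg hx hh.le)
      · rw [← div_lt_iff₀ hh]
        exact Nat.lt_floor_add_one _
  have hA : HasSum (fun m => ∫ t in s m, φ t) (∫ t in Ici (0:ℝ), φ t) := by
    rw [← hunion]
    exact hasSum_integral_iUnion hmeas hdisj (hunion ▸ hint.integrableOn)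
  have hB : HasSum (fun m => ∫ t in s m, |φd t|) (∫ t in Ici (0:ℝ), |φd t|) := by
    rw [← hunion]
    exact hasSum_integral_iUnion hmeas hdisj (hunion ▸ hintd.abs.integrableOn)
  have key : ∀ m : ℕ, |φ ((m : ℝ) * h) - (1 / h) * ∫ t in s m, φ t| ≤ ∫ t in s m, |φd t| := by
    intro m
    set x0 := (m : ℝ) * h with hx0
    set x1 := ((m : ℝ) + 1) * h with hx1
    have hx01 : x0 ≤ x1 := by
      apply mul_le_mul_of_nonneg_right _ hh.le
      linarith
    have hlen : x1 - x0 = h := by rw [hx0, hx1]; ring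
    set B := ∫ t in s m, |φd t| with hBdef
    have hBnn : 0 ≤ B := setIntegral_nonneg (hmeas m) (fun t _ => abs_nonneg _)
    have hptw : ∀ t ∈ s m, |φ x0 - φ t| ≤ B := by
      intro t ht
      have h1 : φ t - φ x0 = ∫ u in x0..t, φd u :=
        (intervalIntegral.integral_eq_sub_of_hasDerivAt (fun u _ => hder u)
          (hφdc.intervalIntegrable x0 t)).symm
      have h2 : |∫ u in x0..t, φd u| ≤ ∫ u in x0..t, |φd u| := by
        simpa [Real.norm_eq_abs] using
          intervalIntegral.norm_integral_le_integral_norm (f := φd) ht.1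
      have h3 : ∫ u in x0..t, |φd u| = ∫ u in Ioc x0 t, |φd u| :=
        intervalIntegral.integral_of_le ht.1
      have h4 : ∫ u in Ioc x0 t, |φd u| ≤ B := by
        apply setIntegral_mono_set (hintd.abs.integrableOn)
          (ae_of_all _ fun u => abs_nonneg _)
        have hsub : Ioc x0 t ⊆ s m := fun u hu => ⟨hu.1.le, lt_of_le_of_lt hu.2 ht.2⟩
        exact hsub.eventuallyLE
      rw [abs_sub_comm, h1]
      exact h2.trans (h3 ▸ h4)
    have hvol : volume (s m) = ENNReal.ofReal h := by
      rw [hsdef]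
      simp only [Real.volume_Ico]
      rw [show ((m:ℝ) + 1) * h - (m:ℝ) * h = h by ring]
    have hvolt : (volume (s m)).toReal = h := by rw [hvol, ENNReal.toReal_ofReal hh.le]
    have hIφ : IntegrableOn φ (s m) := hint.integrableOn
    have hIc : IntegrableOn (fun _ : ℝ => φ x0) (s m) :=
      integrableOn_const (by rw [hvol]; exact ENNReal.ofReal_ne_top)
    have hdiff : |∫ t in s m, (φ x0 - φ t)| ≤ B * (volume (s m)).toReal := by
      have := norm_setIntegral_le_of_norm_le_const (μ := volume) (s := s m)
        (f := fun t : ℝ => φ x0 - φ t)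
        (C := B) (by rw [hvol]; exact ENNReal.ofReal_lt_top)
        (fun t ht => by simpa [Real.norm_eq_abs] using hptw t ht)
      simpa [Real.norm_eq_abs, measureReal_def] using this
    have hsplit : ∫ t in s m, (φ x0 - φ t) = φ x0 * h - ∫ t in s m, φ t := by
      rw [integral_sub hIc hIφ, setIntegral_const, measureReal_def, hvolt, smul_eq_mul, mul_comm]
    have heq : φ x0 - (1 / h) * ∫ t in s m, φ t
        = (1 / h) * ∫ t in s m, (φ x0 - φ t) := by
      rw [hsplit]
      field_simp
    rw [heq, abs_mul, abs_of_nonneg (by positivity : (0:ℝ) ≤ 1 / h)]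
    calc (1 / h) * |∫ t in s m, (φ x0 - φ t)| ≤ (1 / h) * (B * h) := by
          rw [← hvolt]
          exact mul_le_mul_of_nonneg_left hdiff (by positivity)
      _ = B := by field_simp
  have hBsum : Summable (fun m => ∫ t in s m, |φd t|) := hB.summable
  set e : ℕ → ℝ := fun m => φ ((m : ℝ) * h) - (1 / h) * ∫ t in s m, φ t with hedef
  have hesum : Summable e :=
    Summable.of_norm_bounded hBsum (fun m => by rw [Real.norm_eq_abs]; exact key m)
  have hsum : Summable (fun m : ℕ => φ ((m : ℝ) * h)) := by
    have h2 : Summable (fun m => (1 / h) * ∫ t in s m, φ t) := hA.summable.mul_left _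
    have := hesum.add h2
    refine this.congr fun m => ?_
    simp [hedef]
  refine ⟨hsum, ?_⟩
  have htsum : (∑' m : ℕ, φ ((m : ℝ) * h)) - (1 / h) * ∫ t in Ici (0:ℝ), φ t = ∑' m, e m := by
    rw [Summable.tsum_sub hsum (hA.summable.mul_left (1 / h)), tsum_mul_left, hA.tsum_eq]
  rw [htsum]
  have hbnd := tsum_of_norm_bounded hB (fun m => by rw [Real.norm_eq_abs]; exact key m)
  rwa [Real.norm_eq_abs] at hbnd

end EMWGS

/-- Euler–Maclaurin estimate for weighted Gaussian Riemann sums, uniform in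
`v ∈ ℝ` and `a ∈ [a₁, a₂] ⊂ (0, ∞)`. -/
theorem euler_maclaurin_weighted_gaussian_sum (k : ℕ) (a₁ a₂ : ℝ)
    (ha₁ : 0 < a₁) (ha : a₁ ≤ a₂) :
    ∃ C > 0, ∀ p : ℕ, 1 ≤ p → ∀ a ∈ Set.Icc a₁ a₂, ∀ v : ℝ,
      |(∑' m : ℕ, ((m : ℝ) / Real.sqrt p) ^ k *
            Real.exp (-2 * Real.pi * (v - m / (a * Real.sqrt p)) ^ 2)) -
          a ^ (k + 1) * Real.sqrt p *
            (∫ t in Set.Iic v, (v - t) ^ k * Real.exp (-2 * Real.pi * t ^ 2))| ≤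
        C * (1 + |v|) ^ k := by
  set D := ∫ s, emPsi k s with hD
  have hDnn : 0 ≤ D := integral_nonneg (emPsi_nonneg k)
  have ha₂ : (0:ℝ) < a₂ := lt_of_lt_of_le ha₁ ha
  refine ⟨a₂ ^ k * D + 1, by positivity, ?_⟩
  intro p hp a haI v
  obtain ⟨ha1, ha2⟩ := haI
  have ha0 : 0 < a := lt_of_lt_of_le ha₁ ha1
  have hsp : (1:ℝ) ≤ Real.sqrt p := by
    rw [show (1:ℝ) = Real.sqrt 1 by simp]
    exact Real.sqrt_le_sqrt (by exact_mod_cast hp)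
  have hsp0 : 0 < Real.sqrt p := lt_of_lt_of_le one_pos hsp
  have hq : 0 < a * Real.sqrt p := mul_pos ha0 hsp0
  set h : ℝ := 1 / (a * Real.sqrt p) with hhdef
  have hh : 0 < h := by positivity
  have hinv : 1 / h = a * Real.sqrt p := by rw [hhdef]; field_simp
  -- rewrite the sum
  have sum_eq : ∀ m : ℕ, ((m : ℝ) / Real.sqrt p) ^ k *
      Real.exp (-2 * Real.pi * (v - m / (a * Real.sqrt p)) ^ 2)
      = a ^ k * phiF k v ((m : ℝ) * h) := by
    intro m
    have hmh : (m : ℝ) * h = m / (a * Real.sqrt p) := by rw [hhdef]; ring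
    have hdiv : (m : ℝ) / Real.sqrt p = a * ((m : ℝ) * h) := by
      rw [hmh]
      field_simp
    rw [hdiv, hmh, phiF, mul_pow]
    ring
  -- rewrite the integral
  have int_eq : (∫ t in Set.Iic v, (v - t) ^ k * Real.exp (-2 * Real.pi * t ^ 2))
      = ∫ t in Set.Ici (0:ℝ), phiF k v t := by
    have hemb : MeasurableEmbedding (fun s : ℝ => v - s) :=
      (Homeomorph.subLeft v).measurableEmbedding
    have hmap : Measure.map (fun s : ℝ => v - s) volume = volume :=
      Measure.map_sub_left_eq_self volume v
    have := hemb.setIntegral_map (μ := volume)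
      (fun t => (v - t) ^ k * Real.exp (-2 * Real.pi * t ^ 2)) (Set.Iic v)
    rw [hmap] at this
    rw [this]
    have hpre : (fun s : ℝ => v - s) ⁻¹' (Set.Iic v) = Set.Ici (0:ℝ) := by
      ext x
      simp [Set.mem_Iic, Set.mem_Ici, sub_le_iff_le_add]
    rw [hpre]
    apply setIntegral_congr_fun measurableSet_Ici
    intro x _
    simp only [phiF]
    ring_nf
  obtain ⟨hsum, hest⟩ := riemann_sum_est (phiF k v) (phiD k v) (continuous_phiF k v)
    (continuous_phiD k v) (hasDerivAt_phiF k v) (integrable_phiF k v) (integrable_phiD k v) h hh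
  have hts : (∑' m : ℕ, ((m : ℝ) / Real.sqrt p) ^ k *
      Real.exp (-2 * Real.pi * (v - m / (a * Real.sqrt p)) ^ 2))
      = a ^ k * ∑' m : ℕ, phiF k v ((m : ℝ) * h) := by
    rw [← tsum_mul_left]
    exact tsum_congr sum_eq
  have hint2 : a ^ (k + 1) * Real.sqrt p *
      (∫ t in Set.Iic v, (v - t) ^ k * Real.exp (-2 * Real.pi * t ^ 2))
      = a ^ k * ((1 / h) * ∫ t in Set.Ici (0:ℝ), phiF k v t) := by
    rw [int_eq, hinv, pow_succ]
    ring
  rw [hts, hint2, ← mul_sub, abs_mul, abs_of_nonneg (by positivity : (0:ℝ) ≤ a ^ k)]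
  have hak : a ^ k ≤ a₂ ^ k := pow_le_pow_left₀ ha0.le ha2 k
  calc a ^ k * |(∑' m : ℕ, phiF k v ((m : ℝ) * h))
        - (1 / h) * ∫ t in Set.Ici (0:ℝ), phiF k v t|
      ≤ a₂ ^ k * ((1 + |v|) ^ k * D) := by
        apply mul_le_mul hak (hest.trans (integral_abs_phiD_le k v)) (abs_nonneg _)
        positivity
    _ = (a₂ ^ k * D) * (1 + |v|) ^ k := by ring
    _ ≤ (a₂ ^ k * D + 1) * (1 + |v|) ^ k := by
        apply mul_le_mul_of_nonneg_right _ (by positivity)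
        linarith
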